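/- Fix integers d ≥ 1 and d* ≥ 1 and Hermitian d*×d* complex matrices α₀, α₁, …, α_d satisfying the Clifford relations α_k α_ℓ + α_ℓ α_k = 2 δ_{kℓ} 𝟙. Let τ > 0 and let w : [0,τ] → ℝ^d be continuous. Suppose U, Ũ : [0,τ] → (d*×d* complex matrices) are differentiable with U(0) = Ũ(0) = 𝟙 and, for every t ∈ [0,τ], U'(t) = i (∑_{j=1}^d w_j(t) α_j) U(t) and Ũ'(t) = i (∑_{j=1}^d w_j(τ−t) α_j) Ũ(t). Then U(τ)* α₀ = α₀ Ũ(τ), where * denotes the conjugate transpose. -/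

import Mathlib

attribute [local instance] Matrix.normedAddCommGroup Matrix.normedSpace

section Aux
variable {n : ℕ}

noncomputable def mulL (n : ℕ) :
    Matrix (Fin n) (Fin n) ℂ →L[ℝ] Matrix (Fin n) (Fin n) ℂ →L[ℝ] Matrix (Fin n) (Fin n) ℂ :=
  LinearMap.toContinuousLinearMap
  { toFun := fun A => LinearMap.toContinuousLinearMap
      { toFun := fun B => A * B
        map_add' := fun B C => by simp [mul_add]
        map_smul' := fun c B => by simp [Matrix.mul_smul] }
    map_add' := fun A B => by ext C; simp [add_mul]
    map_smul' := fun c A => by ext C; simp [Matrix.smul_mul] }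

@[simp] lemma mulL_apply (A B : Matrix (Fin n) (Fin n) ℂ) : mulL n A B = A * B := rfl

theorem HasDerivWithinAt.matMul {f g : ℝ → Matrix (Fin n) (Fin n) ℂ}
    {f' g' : Matrix (Fin n) (Fin n) ℂ} {s : Set ℝ} {x : ℝ}
    (hf : HasDerivWithinAt f f' s x) (hg : HasDerivWithinAt g g' s x) :
    HasDerivWithinAt (fun t => f t * g t) (f x * g' + f' * g x) s x := by
  have h := ((mulL n).isBoundedBilinearMap.hasFDerivAt (f x, g x)).comp_hasDerivWithinAt x
    (hf.prodMk hg)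
  exact h

noncomputable def ctL (n : ℕ) :
    Matrix (Fin n) (Fin n) ℂ →L[ℝ] Matrix (Fin n) (Fin n) ℂ :=
  LinearMap.toContinuousLinearMap
  { toFun := Matrix.conjTranspose
    map_add' := fun A B => Matrix.conjTranspose_add A B
    map_smul' := fun c A => by
      ext i j
      simp [Matrix.conjTranspose_apply] }

@[simp] lemma ctL_apply (A : Matrix (Fin n) (Fin n) ℂ) : ctL n A = A.conjTranspose := rfl

end Aux


/-- Time-reversal identity for the spin-transport matrices: if `U' = i (α·w(t)) U` and
`Ũ' = i (α·w(τ-t)) Ũ` on `[0,τ]` with `U(0) = Ũ(0) = 𝟙`, then `U(τ)* α₀ = α₀ Ũ(τ)`. -/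
theorem stmt19 (d dstar : ℕ) (hd : 1 ≤ d) (hdstar : 1 ≤ dstar)
    (α : Fin (d + 1) → Matrix (Fin dstar) (Fin dstar) ℂ)
    (hHerm : ∀ k, (α k).IsHermitian)
    (hCliff : ∀ k l, α k * α l + α l * α k =
      if k = l then (2 : ℂ) • (1 : Matrix (Fin dstar) (Fin dstar) ℂ) else 0)
    (τ : ℝ) (hτ : 0 < τ)
    (w : ℝ → Fin d → ℝ) (hw : ContinuousOn w (Set.Icc 0 τ))
    (U Utld : ℝ → Matrix (Fin dstar) (Fin dstar) ℂ)
    (hU0 : U 0 = 1) (hUtld0 : Utld 0 = 1)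
    (hU : ∀ t ∈ Set.Icc (0 : ℝ) τ,
      HasDerivWithinAt U
        (Complex.I • ((∑ j : Fin d, (w t j : ℂ) • α j.succ) * U t))
        (Set.Icc (0 : ℝ) τ) t)
    (hUtld : ∀ t ∈ Set.Icc (0 : ℝ) τ,
      HasDerivWithinAt Utld
        (Complex.I • ((∑ j : Fin d, (w (τ - t) j : ℂ) • α j.succ) * Utld t))
        (Set.Icc (0 : ℝ) τ) t) :
    (U τ).conjTranspose * α 0 = α 0 * Utld τ := by
  set A : ℝ → Matrix (Fin dstar) (Fin dstar) ℂ :=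
    fun s => ∑ j : Fin d, (w s j : ℂ) • α j.succ with hA
  have hanti : ∀ s, α 0 * A s + A s * α 0 = 0 := by
    intro s
    simp only [hA, Finset.sum_mul, Finset.mul_sum, ← Finset.sum_add_distrib]
    apply Finset.sum_eq_zero
    intro j _
    have h := hCliff j.succ 0
    rw [if_neg (by simp [Fin.ext_iff])] at h
    rw [Matrix.smul_mul, Matrix.mul_smul, ← smul_add, add_comm, h, smul_zero]
  have hAH : ∀ s, (A s).conjTranspose = A s := by
    intro s
    simp only [hA, Matrix.conjTranspose_sum, Matrix.conjTranspose_smul, Complex.star_def,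
      Complex.conj_ofReal]
    exact Finset.sum_congr rfl fun x _ => by rw [(hHerm x.succ).eq]
  set G : ℝ → Matrix (Fin dstar) (Fin dstar) ℂ :=
    fun t => ((U (τ - t)).conjTranspose * α 0) * Utld t with hG
  have key : ∀ t ∈ Set.Icc (0:ℝ) τ, HasDerivWithinAt G 0 (Set.Icc 0 τ) t := by
    intro t ht
    have ht' : τ - t ∈ Set.Icc (0:ℝ) τ := ⟨by linarith [ht.2], by linarith [ht.1]⟩
    have hφ : HasDerivWithinAt (fun t : ℝ => τ - t) (-1 : ℝ) (Set.Icc 0 τ) t := by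
      simpa using ((hasDerivWithinAt_id t (Set.Icc 0 τ)).const_sub τ)
    have hmaps : Set.MapsTo (fun t : ℝ => τ - t) (Set.Icc 0 τ) (Set.Icc 0 τ) := by
      intro s hs
      simp only [Set.mem_Icc] at hs ⊢
      constructor <;> linarith
    have h1 : HasDerivWithinAt (fun t => U (τ - t))
        ((-1 : ℝ) • (Complex.I • (A (τ - t) * U (τ - t)))) (Set.Icc 0 τ) t :=
      HasDerivWithinAt.scomp t (hU _ ht') hφ hmaps
    have h2 : HasDerivWithinAt (fun t => (U (τ - t)).conjTranspose)
        (Complex.I • ((U (τ - t)).conjTranspose * A (τ - t))) (Set.Icc 0 τ) t := by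
      have h := ((ctL dstar).hasFDerivAt).comp_hasDerivWithinAt t h1
      have e : ctL dstar ((-1 : ℝ) • (Complex.I • (A (τ - t) * U (τ - t))))
          = Complex.I • ((U (τ - t)).conjTranspose * A (τ - t)) := by
        simp [Matrix.conjTranspose_smul, Matrix.conjTranspose_mul, hAH, Complex.star_def,
          Complex.conj_I, smul_smul]
      have h := h.congr_deriv e
      exact h
    have h3 : HasDerivWithinAt (fun t => (U (τ - t)).conjTranspose * α 0)
        ((Complex.I • ((U (τ - t)).conjTranspose * A (τ - t))) * α 0) (Set.Icc 0 τ) t := by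
      simpa using h2.matMul (hasDerivWithinAt_const t (Set.Icc 0 τ) (α 0))
    have h4 := h3.matMul (hUtld t ht)
    have hz : ((U (τ - t)).conjTranspose * α 0) * (Complex.I • (A (τ - t) * Utld t))
        + ((Complex.I • ((U (τ - t)).conjTranspose * A (τ - t))) * α 0) * Utld t = 0 := by
      have h := hanti (τ - t)
      rw [Matrix.mul_smul, Matrix.smul_mul, Matrix.smul_mul, ← smul_add,
        show ((U (τ - t)).conjTranspose * α 0) * (A (τ - t) * Utld t)
            + (((U (τ - t)).conjTranspose * A (τ - t)) * α 0) * Utld t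
          = (U (τ - t)).conjTranspose * ((α 0 * A (τ - t) + A (τ - t) * α 0) * Utld t) by
            noncomm_ring, h]
      simp
    rw [hG]
    have := h4
    rw [hz] at this
    exact this
  have hcont : ContinuousOn G (Set.Icc 0 τ) := fun x hx => (key x hx).continuousWithinAt
  have hderiv : ∀ x ∈ Set.Ico (0:ℝ) τ, HasDerivWithinAt G 0 (Set.Ici x) x := by
    intro x hx
    refine (key x ⟨hx.1, hx.2.le⟩).mono_of_mem_nhdsWithin ?_
    rw [mem_nhdsWithin]
    exact ⟨Set.Iio τ, isOpen_Iio, hx.2, fun y hy => ⟨le_trans hx.1 hy.2, hy.1.le⟩⟩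
  have hconst := constant_of_has_deriv_right_zero hcont hderiv τ (Set.right_mem_Icc.2 hτ.le)
  have h0 : G 0 = (U τ).conjTranspose * α 0 := by simp [hG, hUtld0]
  have hτ' : G τ = α 0 * Utld τ := by simp [hG, hU0]
  rw [← h0, ← hτ', hconst]
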